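/- Let φ₀, φ₁ be nondegenerate Orlicz functions in Δ₂, θ ∈ (0,1), and φ_θ⁻¹ = (φ₀⁻¹)^{1−θ}(φ₁⁻¹)^θ. Define g_x(z) = φ₀⁻¹(φ_θ(|x|))^{1−z} φ₁⁻¹(φ_θ(|x|))^z sgn(x) for x ∈ ℂ. Then there exist constants α, β > 0 such that for all x, y ∈ ℂ and t ∈ [0,1]: φ_θ(|t·g_x'(θ) + (1−t)·g_y'(θ) − g_{tx+(1−t)y}'(θ)|) ≤ β·(t·φ_θ(|x|) + (1−t)·φ_θ(|y|)). In particular, the function (x₁, x₀) ↦ φ_θ(x₀) + φ_θ(x₁ − g_{x₀}'(θ)) is quasi-convex on ℂ², i.e., is a quasi-Young function. -/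

import Mathlib

open Complex


lemma orlicz_mono {φ : ℝ → ℝ} (hconv : ConvexOn ℝ (Set.Ici 0) φ) (hzero : φ 0 = 0)
    (hnonneg : ∀ t, 0 ≤ t → 0 ≤ φ t) {u v : ℝ} (hu : 0 ≤ u) (huv : u ≤ v) : φ u ≤ φ v := by
  rcases eq_or_lt_of_le huv with rfl | hlt
  · exact le_rfl
  have hv : 0 < v := lt_of_le_of_lt hu hlt
  have hdiv0 : 0 ≤ u / v := div_nonneg hu hv.le
  have hdiv1 : u / v ≤ 1 := (div_le_one hv).mpr huv
  have h1 : φ ((1 - u / v) • (0:ℝ) + (u / v) • v) ≤ (1 - u / v) * φ 0 + (u / v) * φ v :=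
    hconv.2 Set.self_mem_Ici (Set.mem_Ici.mpr hv.le) (by linarith) hdiv0 (by ring)
  simp only [smul_eq_mul, mul_zero, zero_add] at h1
  rw [div_mul_cancel₀ _ hv.ne'] at h1
  calc φ u ≤ (1 - u / v) * φ 0 + u / v * φ v := h1
    _ = u / v * φ v := by rw [hzero]; ring
    _ ≤ 1 * φ v := by
        exact mul_le_mul_of_nonneg_right hdiv1 (hnonneg v hv.le)
    _ = φ v := one_mul _

lemma orlicz_inv_mono {φ φinv : ℝ → ℝ} (hconv : ConvexOn ℝ (Set.Ici 0) φ) (hzero : φ 0 = 0)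
    (hnonneg : ∀ t, 0 ≤ t → 0 ≤ φ t) (hinv_nonneg : ∀ s, 0 ≤ s → 0 ≤ φinv s)
    (hright : ∀ s, 0 ≤ s → φ (φinv s) = s)
    {s s' : ℝ} (hs : 0 ≤ s) (hss : s ≤ s') : φinv s ≤ φinv s' := by
  by_contra hlt
  push_neg at hlt
  have h2 := orlicz_mono hconv hzero hnonneg (hinv_nonneg s' (hs.trans hss)) hlt.le
  rw [hright s hs, hright s' (hs.trans hss)] at h2
  have : s = s' := le_antisymm hss h2
  subst this
  exact lt_irrefl _ hlt

lemma orlicz_le_inv {φ φinv : ℝ → ℝ} (hconv : ConvexOn ℝ (Set.Ici 0) φ) (hzero : φ 0 = 0)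
    (hnonneg : ∀ t, 0 ≤ t → 0 ≤ φ t) (hinv_nonneg : ∀ s, 0 ≤ s → 0 ≤ φinv s)
    (hleft : ∀ t, 0 ≤ t → φinv (φ t) = t) (hright : ∀ s, 0 ≤ s → φ (φinv s) = s)
    {a s : ℝ} (ha : 0 ≤ a) (h : φ a ≤ s) : a ≤ φinv s := by
  have h2 := orlicz_inv_mono hconv hzero hnonneg hinv_nonneg hright (hnonneg a ha) h
  rwa [hleft a ha] at h2

lemma orlicz_inv_concave {φ φinv : ℝ → ℝ} (hconv : ConvexOn ℝ (Set.Ici 0) φ) (hzero : φ 0 = 0)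
    (hnonneg : ∀ t, 0 ≤ t → 0 ≤ φ t) (hinv_nonneg : ∀ s, 0 ≤ s → 0 ≤ φinv s)
    (hleft : ∀ t, 0 ≤ t → φinv (φ t) = t) (hright : ∀ s, 0 ≤ s → φ (φinv s) = s)
    {u v t : ℝ} (hu : 0 ≤ u) (hv : 0 ≤ v) (ht0 : 0 ≤ t) (ht1 : t ≤ 1) :
    t * φinv u + (1 - t) * φinv v ≤ φinv (t * u + (1 - t) * v) := by
  apply orlicz_le_inv hconv hzero hnonneg hinv_nonneg hleft hright
  · have := hinv_nonneg u hu; have := hinv_nonneg v hv; nlinarith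
  · have h1 : φ (t • φinv u + (1 - t) • φinv v) ≤ t * φ (φinv u) + (1 - t) * φ (φinv v) :=
      hconv.2 (Set.mem_Ici.mpr (hinv_nonneg u hu)) (Set.mem_Ici.mpr (hinv_nonneg v hv))
        ht0 (by linarith) (by ring)
    simp only [smul_eq_mul] at h1
    rw [hright u hu, hright v hv] at h1
    exact h1

lemma orlicz_inv_double {φ φinv : ℝ → ℝ} (hconv : ConvexOn ℝ (Set.Ici 0) φ) (hzero : φ 0 = 0)
    (hnonneg : ∀ t, 0 ≤ t → 0 ≤ φ t) (hinv_nonneg : ∀ s, 0 ≤ s → 0 ≤ φinv s)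
    (hleft : ∀ t, 0 ≤ t → φinv (φ t) = t) (hright : ∀ s, 0 ≤ s → φ (φinv s) = s)
    {M : ℝ} (hM : 0 < M) (hΔ : ∀ t, 0 ≤ t → φ (2 * t) ≤ M * φ t)
    {r : ℝ} (hr : 0 ≤ r) : 2 * φinv r ≤ φinv (M * r) := by
  apply orlicz_le_inv hconv hzero hnonneg hinv_nonneg hleft hright
  · have := hinv_nonneg r hr; linarith
  · calc φ (2 * φinv r) ≤ M * φ (φinv r) := hΔ _ (hinv_nonneg r hr)
      _ = M * r := by rw [hright r hr]

lemma geom_superadd {θ a0 a1 b0 b1 : ℝ} (hθ0 : 0 < θ) (hθ1 : θ < 1)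
    (ha0 : 0 ≤ a0) (ha1 : 0 ≤ a1) (hb0 : 0 ≤ b0) (hb1 : 0 ≤ b1) :
    a0 ^ (1 - θ) * a1 ^ θ + b0 ^ (1 - θ) * b1 ^ θ ≤ (a0 + b0) ^ (1 - θ) * (a1 + b1) ^ θ := by
  rcases eq_or_lt_of_le (add_nonneg ha0 hb0) with h0 | h0
  · have ha : a0 = 0 := by linarith [ha0, hb0]
    have hb : b0 = 0 := by linarith [ha0, hb0]
    have h1θ : (1:ℝ) - θ ≠ 0 := by linarith
    simp [ha, hb, Real.zero_rpow h1θ]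
  rcases eq_or_lt_of_le (add_nonneg ha1 hb1) with h1 | h1
  · have ha : a1 = 0 := by linarith [ha1, hb1]
    have hb : b1 = 0 := by linarith [ha1, hb1]
    have hθne : θ ≠ 0 := by linarith
    simp [ha, hb, Real.zero_rpow hθne]
  set s0 := a0 + b0
  set s1 := a1 + b1
  have key : ∀ c0 c1 : ℝ, 0 ≤ c0 → 0 ≤ c1 →
      c0 ^ (1 - θ) * c1 ^ θ ≤ ((1 - θ) * (c0 / s0) + θ * (c1 / s1)) * (s0 ^ (1 - θ) * s1 ^ θ) := by
    intro c0 c1 hc0 hc1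
    have e1 : c0 ^ (1 - θ) * c1 ^ θ
        = ((c0 / s0) ^ (1 - θ) * (c1 / s1) ^ θ) * (s0 ^ (1 - θ) * s1 ^ θ) := by
      rw [Real.div_rpow hc0 h0.le, Real.div_rpow hc1 h1.le]
      field_simp
    rw [e1]
    apply mul_le_mul_of_nonneg_right
    · exact Real.geom_mean_le_arith_mean2_weighted (by linarith) hθ0.le
        (div_nonneg hc0 h0.le) (div_nonneg hc1 h1.le) (by ring)
    · exact mul_nonneg (Real.rpow_nonneg h0.le _) (Real.rpow_nonneg h1.le _)
  have k1 := key a0 a1 ha0 ha1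
  have k2 := key b0 b1 hb0 hb1
  have e2 : ((1 - θ) * (a0 / s0) + θ * (a1 / s1)) + ((1 - θ) * (b0 / s0) + θ * (b1 / s1)) = 1 := by
    field_simp
    ring
  calc a0 ^ (1 - θ) * a1 ^ θ + b0 ^ (1 - θ) * b1 ^ θ
      ≤ (((1 - θ) * (a0 / s0) + θ * (a1 / s1)) + ((1 - θ) * (b0 / s0) + θ * (b1 / s1)))
        * (s0 ^ (1 - θ) * s1 ^ θ) := by rw [add_mul]; exact add_le_add k1 k2
    _ = s0 ^ (1 - θ) * s1 ^ θ := by rw [e2, one_mul]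


lemma threelines_core {θ t : ℝ} (hθ0 : 0 < θ) (hθ1 : θ < 1)
    (ht0 : 0 ≤ t) (ht1 : t ≤ 1)
    (x y : ℂ) (l1 l2 l3 A0 A1 B0 B1 C0 C1 : ℝ)
    (hxA0 : ‖x‖ * Real.exp (-θ * l1) = A0)
    (hxA1 : ‖x‖ * Real.exp ((1 - θ) * l1) = A1)
    (hyB0 : ‖y‖ * Real.exp (-θ * l2) = B0)
    (hyB1 : ‖y‖ * Real.exp ((1 - θ) * l2) = B1)
    (hzC0 : ‖t • x + (1 - t) • y‖ * Real.exp (-θ * l3) = C0)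
    (hzC1 : ‖t • x + (1 - t) • y‖ * Real.exp ((1 - θ) * l3) = C1) :
    ‖t • (x * (l1:ℂ)) + (1 - t) • (y * (l2:ℂ)) - (t • x + (1 - t) • y) * (l3:ℂ)‖
      ≤ ((t * A0 + (1 - t) * B0 + C0) / θ) ^ (1 - θ) *
        ((t * A1 + (1 - t) * B1 + C1) / (1 - θ)) ^ θ := by
  set z : ℂ := t • x + (1 - t) • y with hz
  set N : ℂ → ℂ := fun w =>
    t • (x * Complex.exp ((w - (θ:ℂ)) * (l1:ℂ))) +
    (1 - t) • (y * Complex.exp ((w - (θ:ℂ)) * (l2:ℂ))) -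
    z * Complex.exp ((w - (θ:ℂ)) * (l3:ℂ)) with hN
  have hNθ : N (θ:ℂ) = 0 := by
    simp [hN, hz]
  have hNdiff : Differentiable ℂ N := by
    have he : ∀ l : ℝ, Differentiable ℂ (fun w : ℂ => Complex.exp ((w - (θ:ℂ)) * (l:ℂ))) :=
      fun l => ((differentiable_id.sub_const _).mul_const _).cexp
    exact (((((he l1).const_mul x).const_smul t).add
      (((he l2).const_mul y).const_smul (1 - t))).sub ((he l3).const_mul z))
  have hexpD : ∀ l : ℝ, HasDerivAt (fun w : ℂ => Complex.exp ((w - (θ:ℂ)) * (l:ℂ))) (l:ℂ) (θ:ℂ) := by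
    intro l
    have h1 : HasDerivAt (fun w : ℂ => (w - (θ:ℂ)) * (l:ℂ)) (l:ℂ) (θ:ℂ) := by
      simpa using (((hasDerivAt_id ((θ:ℂ))).sub_const ((θ:ℂ))).mul_const ((l:ℂ)))
    have h2 := h1.cexp
    simpa using h2
  have hderivN : HasDerivAt N (t • (x * (l1:ℂ)) + (1 - t) • (y * (l2:ℂ)) - z * (l3:ℂ)) (θ:ℂ) := by
    have h1 := (((hexpD l1).const_mul x).const_smul t).add (((hexpD l2).const_mul y).const_smul (1 - t))
    have h2 := (hexpD l3).const_mul z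
    exact h1.sub h2
  set h : ℂ → ℂ := dslope N (θ:ℂ) with hh
  have hhdiff : Differentiable ℂ h := by
    rw [← differentiableOn_univ]
    exact (Complex.differentiableOn_dslope Filter.univ_mem).mpr hNdiff.differentiableOn
  have hhθ : h (θ:ℂ) = t • (x * (l1:ℂ)) + (1 - t) • (y * (l2:ℂ)) - z * (l3:ℂ) := by
    rw [hh, dslope_same]
    exact hderivN.deriv
  have habs_h : ∀ w : ℂ, w ≠ (θ:ℂ) → ‖h w‖ = ‖N w‖ / ‖w - (θ:ℂ)‖ := by
    intro w hw
    rw [hh, dslope_of_ne _ hw, slope_def_field, hNθ, sub_zero, norm_div]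
  have hre : ∀ (w : ℂ) (l : ℝ), ((w - (θ:ℂ)) * (l:ℂ)).re = (w.re - θ) * l := by
    intro w l
    simp [Complex.mul_re]
  have hNbound : ∀ w : ℂ, ‖N w‖ ≤
      t * (‖x‖ * Real.exp ((w.re - θ) * l1)) +
      (1 - t) * (‖y‖ * Real.exp ((w.re - θ) * l2)) +
      ‖z‖ * Real.exp ((w.re - θ) * l3) := by
    intro w
    have e1 : ∀ (c : ℂ) (l : ℝ), ‖c * Complex.exp ((w - (θ:ℂ)) * (l:ℂ))‖
        = ‖c‖ * Real.exp ((w.re - θ) * l) := by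
      intro c l
      rw [norm_mul, Complex.norm_exp, hre]
    calc ‖N w‖
        ≤ ‖t • (x * Complex.exp ((w - (θ:ℂ)) * (l1:ℂ))) +
            (1 - t) • (y * Complex.exp ((w - (θ:ℂ)) * (l2:ℂ)))‖ +
          ‖z * Complex.exp ((w - (θ:ℂ)) * (l3:ℂ))‖ := by
          exact norm_sub_le _ _
      _ ≤ (‖t • (x * Complex.exp ((w - (θ:ℂ)) * (l1:ℂ)))‖ +
            ‖(1 - t) • (y * Complex.exp ((w - (θ:ℂ)) * (l2:ℂ)))‖) +
          ‖z * Complex.exp ((w - (θ:ℂ)) * (l3:ℂ))‖ := by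
          exact add_le_add (norm_add_le _ _) le_rfl
      _ = t * (‖x‖ * Real.exp ((w.re - θ) * l1)) +
          (1 - t) * (‖y‖ * Real.exp ((w.re - θ) * l2)) +
          ‖z‖ * Real.exp ((w.re - θ) * l3) := by
          simp only [Complex.real_smul, norm_mul, Complex.norm_exp, hre, Complex.norm_real, Real.norm_eq_abs]
          rw [_root_.abs_of_nonneg ht0, _root_.abs_of_nonneg (by linarith : (0:ℝ) ≤ 1 - t)]
  have hA0n : 0 ≤ A0 := hxA0 ▸ mul_nonneg (norm_nonneg _) (Real.exp_nonneg _)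
  have hA1n : 0 ≤ A1 := hxA1 ▸ mul_nonneg (norm_nonneg _) (Real.exp_nonneg _)
  have hB0n : 0 ≤ B0 := hyB0 ▸ mul_nonneg (norm_nonneg _) (Real.exp_nonneg _)
  have hB1n : 0 ≤ B1 := hyB1 ▸ mul_nonneg (norm_nonneg _) (Real.exp_nonneg _)
  have hC0n : 0 ≤ C0 := hzC0 ▸ mul_nonneg (norm_nonneg _) (Real.exp_nonneg _)
  have hC1n : 0 ≤ C1 := hzC1 ▸ mul_nonneg (norm_nonneg _) (Real.exp_nonneg _)
  have hS0n : 0 ≤ t * A0 + (1 - t) * B0 + C0 := by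
    have h1 : 0 ≤ t * A0 := mul_nonneg ht0 hA0n
    have h2 : 0 ≤ (1 - t) * B0 := mul_nonneg (by linarith) hB0n
    linarith
  have hS1n : 0 ≤ t * A1 + (1 - t) * B1 + C1 := by
    have h1 : 0 ≤ t * A1 := mul_nonneg ht0 hA1n
    have h2 : 0 ≤ (1 - t) * B1 := mul_nonneg (by linarith) hB1n
    linarith
  have hline0 : ∀ w : ℂ, w ∈ Complex.re ⁻¹' {(0:ℝ)} →
      ‖h w‖ ≤ (t * A0 + (1 - t) * B0 + C0) / θ := by
    intro w hw
    have hwre : w.re = 0 := hw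
    have hwne : w ≠ (θ:ℂ) := by
      intro hcon
      rw [hcon] at hwre
      simp only [Complex.ofReal_re] at hwre
      exact hθ0.ne' hwre
    have hden : θ ≤ ‖w - (θ:ℂ)‖ := by
      calc θ = |(w - (θ:ℂ)).re| := by
            simp [Complex.sub_re, hwre, _root_.abs_of_nonneg hθ0.le]
        _ ≤ ‖w - (θ:ℂ)‖ := Complex.abs_re_le_norm _
    have hnum : ‖N w‖ ≤ t * A0 + (1 - t) * B0 + C0 := by
      have hb := hNbound w
      rw [hwre] at hb
      rw [← hxA0, ← hyB0, ← hzC0]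
      simpa [zero_sub, neg_mul] using hb
    rw [habs_h w hwne]
    exact div_le_div₀ hS0n hnum hθ0 hden
  have hline1 : ∀ w : ℂ, w ∈ Complex.re ⁻¹' {(1:ℝ)} →
      ‖h w‖ ≤ (t * A1 + (1 - t) * B1 + C1) / (1 - θ) := by
    intro w hw
    have hwre : w.re = 1 := hw
    have hwne : w ≠ (θ:ℂ) := by
      intro hcon
      rw [hcon] at hwre
      simp only [Complex.ofReal_re] at hwre
      exact (by linarith : θ ≠ 1) hwre
    have hden : 1 - θ ≤ ‖w - (θ:ℂ)‖ := by
      calc 1 - θ = |(w - (θ:ℂ)).re| := by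
            simp [Complex.sub_re, hwre, _root_.abs_of_nonneg (by linarith : (0:ℝ) ≤ 1 - θ)]
        _ ≤ ‖w - (θ:ℂ)‖ := Complex.abs_re_le_norm _
    have hnum : ‖N w‖ ≤ t * A1 + (1 - t) * B1 + C1 := by
      have hb := hNbound w
      rw [hwre] at hb
      rw [← hxA1, ← hyB1, ← hzC1]
      simpa using hb
    rw [habs_h w hwne]
    exact div_le_div₀ hS1n hnum (by linarith) hden
  set δ := min θ (1 - θ) with hδ
  have hδpos : 0 < δ := lt_min hθ0 (by linarith)
  set Cn := t * (‖x‖ * Real.exp |l1|) + (1 - t) * (‖y‖ * Real.exp |l2|) +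
    ‖z‖ * Real.exp |l3| with hCndef
  have hCnn : 0 ≤ Cn := by
    have h1 : 0 ≤ t * (‖x‖ * Real.exp |l1|) :=
      mul_nonneg ht0 (mul_nonneg (norm_nonneg _) (Real.exp_nonneg _))
    have h2 : 0 ≤ (1 - t) * (‖y‖ * Real.exp |l2|) :=
      mul_nonneg (by linarith) (mul_nonneg (norm_nonneg _) (Real.exp_nonneg _))
    have h3 : 0 ≤ ‖z‖ * Real.exp |l3| :=
      mul_nonneg (norm_nonneg _) (Real.exp_nonneg _)
    linarith
  have hNCn : ∀ w : ℂ, w.re ∈ Set.Icc (0:ℝ) 1 → ‖N w‖ ≤ Cn := by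
    intro w hw
    refine (hNbound w).trans ?_
    have key : ∀ l : ℝ, Real.exp ((w.re - θ) * l) ≤ Real.exp |l| := by
      intro l
      apply Real.exp_le_exp.mpr
      calc (w.re - θ) * l ≤ |(w.re - θ) * l| := le_abs_self _
        _ = |w.re - θ| * |l| := abs_mul _ _
        _ ≤ 1 * |l| := by
            apply mul_le_mul_of_nonneg_right _ (abs_nonneg l)
            rw [abs_le]
            exact ⟨by linarith [hw.1], by linarith [hw.2]⟩
        _ = |l| := one_mul _
    rw [hCndef]
    have k1 := key l1
    have k2 := key l2
    have k3 := key l3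
    have hax := norm_nonneg x
    have hay := norm_nonneg y
    have haz := norm_nonneg z
    nlinarith [mul_le_mul_of_nonneg_left k1 hax, mul_le_mul_of_nonneg_left k2 hay,
      mul_le_mul_of_nonneg_left k3 haz, mul_nonneg hax (Real.exp_nonneg ((w.re - θ) * l1))]
  obtain ⟨Cb, hCb⟩ := (isCompact_closedBall (θ:ℂ) δ).exists_bound_of_continuousOn
    hhdiff.continuous.continuousOn
  have hBdd : BddAbove ((norm ∘ h) '' Complex.HadamardThreeLines.verticalClosedStrip 0 1) := by
    refine ⟨max Cb (Cn / δ), ?_⟩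
    rintro r ⟨w, hw, rfl⟩
    by_cases hwK : w ∈ Metric.closedBall (θ:ℂ) δ
    · exact le_max_of_le_left (hCb w hwK)
    · have hdist : δ < dist w (θ:ℂ) := by rwa [Metric.mem_closedBall, not_le] at hwK
      have hwne : w ≠ (θ:ℂ) := by
        intro h'
        rw [h', dist_self] at hdist
        linarith
      refine le_max_of_le_right ?_
      rw [Function.comp_apply, habs_h w hwne]
      have hde : ‖w - (θ:ℂ)‖ = dist w (θ:ℂ) := (Complex.dist_eq w (θ:ℂ)).symm
      exact div_le_div₀ hCnn (hNCn w hw) hδpos (by rw [hde]; exact hdist.le)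
  have hmem : (θ:ℂ) ∈ Complex.HadamardThreeLines.verticalClosedStrip 0 1 := by
    simp only [Complex.HadamardThreeLines.verticalClosedStrip, Set.mem_preimage,
      Complex.ofReal_re, Set.mem_Icc]
    exact ⟨hθ0.le, hθ1.le⟩
  have hmain := Complex.HadamardThreeLines.norm_le_interp_of_mem_verticalClosedStrip₀₁' h hmem
    hhdiff.diffContOnCl hBdd hline0 hline1
  rw [hhθ] at hmain
  simpa using hmain

noncomputable def csgn (x : ℂ) : ℂ := if x = 0 then 0 else x / (‖x‖ : ℂ)

set_option maxHeartbeats 2000000 in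
/-- quasi-convexity estimate for the derivation `x ↦ g_x'(θ)` and
quasi-convexity of `(x₁,x₀) ↦ φ_θ(x₀) + φ_θ(x₁ − g_{x₀}'(θ))`. -/
theorem derivation_quasiconvexity
    (φ₀ φ₁ φ₀inv φ₁inv φθ : ℝ → ℝ) (θ : ℝ) (hθ : θ ∈ Set.Ioo (0:ℝ) 1)
    -- φ₀, φ₁ are nondegenerate Orlicz functions in Δ₂
    (hconv₀ : ConvexOn ℝ (Set.Ici 0) φ₀) (hzero₀ : φ₀ 0 = 0)
    (hnonneg₀ : ∀ t, 0 ≤ t → 0 ≤ φ₀ t)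
    (htop₀ : Filter.Tendsto φ₀ Filter.atTop Filter.atTop)
    (hnondeg₀ : ∀ t, 0 < t → 0 < φ₀ t)
    (hΔ₂₀ : ∃ M > 0, ∀ t, 0 ≤ t → φ₀ (2 * t) ≤ M * φ₀ t)
    (hconv₁ : ConvexOn ℝ (Set.Ici 0) φ₁) (hzero₁ : φ₁ 0 = 0)
    (hnonneg₁ : ∀ t, 0 ≤ t → 0 ≤ φ₁ t)
    (htop₁ : Filter.Tendsto φ₁ Filter.atTop Filter.atTop)
    (hnondeg₁ : ∀ t, 0 < t → 0 < φ₁ t)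
    (hΔ₂₁ : ∃ M > 0, ∀ t, 0 ≤ t → φ₁ (2 * t) ≤ M * φ₁ t)
    -- φ₀inv, φ₁inv are the inverses of φ₀, φ₁ on [0,∞)
    (hinv_nonneg₀ : ∀ s, 0 ≤ s → 0 ≤ φ₀inv s)
    (hleft₀ : ∀ t, 0 ≤ t → φ₀inv (φ₀ t) = t)
    (hright₀ : ∀ s, 0 ≤ s → φ₀ (φ₀inv s) = s)
    (hinv_nonneg₁ : ∀ s, 0 ≤ s → 0 ≤ φ₁inv s)
    (hleft₁ : ∀ t, 0 ≤ t → φ₁inv (φ₁ t) = t)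
    (hright₁ : ∀ s, 0 ≤ s → φ₁ (φ₁inv s) = s)
    -- φθ is the Orlicz function with φθ⁻¹ = (φ₀⁻¹)^{1−θ} (φ₁⁻¹)^θ
    (hθnonneg : ∀ s, 0 ≤ s → 0 ≤ φθ s)
    (hθleft : ∀ t, 0 ≤ t → φθ (φ₀inv t ^ (1 - θ) * φ₁inv t ^ θ) = t)
    (hθright : ∀ s, 0 ≤ s → φ₀inv (φθ s) ^ (1 - θ) * φ₁inv (φθ s) ^ θ = s)
    :
    let g : ℂ → ℂ → ℂ := fun x z =>
      ((φ₀inv (φθ (‖x‖)) : ℂ) ^ ((1 : ℂ) - z)) *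
        ((φ₁inv (φθ (‖x‖)) : ℂ) ^ z) * csgn x
    let Ω : ℂ → ℂ := fun x => deriv (g x) θ
    let Ψ : ℂ × ℂ → ℝ := fun p =>
      φθ (‖p.2‖) + φθ (‖p.1 - Ω p.2‖)
    (∃ α β : ℝ, 0 < α ∧ 0 < β ∧ ∀ x y : ℂ, ∀ t ∈ Set.Icc (0:ℝ) 1,
      φθ (‖t • Ω x + (1 - t) • Ω y - Ω (t • x + (1 - t) • y)‖) ≤
        β * (t * φθ (‖x‖) + (1 - t) * φθ (‖y‖))) ∧
    (∃ C : ℝ, 0 < C ∧ ∀ p q : ℂ × ℂ, ∀ t ∈ Set.Icc (0:ℝ) 1,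
      Ψ (t • p + (1 - t) • q) ≤ C * (t * Ψ p + (1 - t) * Ψ q)) := by
  intro g Ω Ψ
  obtain ⟨hθ0, hθ1⟩ := hθ
  obtain ⟨M₀, hM₀, hΔ₀⟩ := hΔ₂₀
  obtain ⟨M₁, hM₁, hΔ₁⟩ := hΔ₂₁
  set M : ℝ := max M₀ M₁ with hMdef
  have hM : 0 < M := lt_of_lt_of_le hM₀ (le_max_left _ _)
  have hθ1' : 0 < 1 - θ := by linarith
  have hθne : (1:ℝ) - θ ≠ 0 := by linarith
  -- basic identities
  have hΩdef : ∀ x : ℂ, Ω x = deriv (g x) (θ:ℂ) := fun _ => rfl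
  have hΨdef : ∀ p : ℂ × ℂ, Ψ p = φθ (‖p.2‖) + φθ (‖p.1 - Ω p.2‖) :=
    fun _ => rfl
  have hinv₀0 : φ₀inv 0 = 0 := by
    have h1 := hleft₀ 0 le_rfl
    rwa [hzero₀] at h1
  have hinv₁0 : φ₁inv 0 = 0 := by
    have h1 := hleft₁ 0 le_rfl
    rwa [hzero₁] at h1
  have hφθ0 : φθ 0 = 0 := by
    have h1 := hθleft 0 le_rfl
    rwa [hinv₀0, hinv₁0, Real.zero_rpow hθne, zero_mul] at h1
  -- positivity
  have hapos : ∀ r : ℝ, 0 < r → 0 < φ₀inv (φθ r) := by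
    intro r hr
    rcases (hinv_nonneg₀ _ (hθnonneg r hr.le)).lt_or_eq with h | h
    · exact h
    · exfalso
      have h2 := hθright r hr.le
      rw [← h, Real.zero_rpow hθne, zero_mul] at h2
      linarith
  have hbpos : ∀ r : ℝ, 0 < r → 0 < φ₁inv (φθ r) := by
    intro r hr
    rcases (hinv_nonneg₁ _ (hθnonneg r hr.le)).lt_or_eq with h | h
    · exact h
    · exfalso
      have h2 := hθright r hr.le
      rw [← h, Real.zero_rpow (by linarith : θ ≠ 0), mul_zero] at h2
      linarith
  -- monotonicity of φθ
  have hrho_mono : ∀ r r' : ℝ, 0 ≤ r → r ≤ r' →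
      φ₀inv r ^ (1 - θ) * φ₁inv r ^ θ ≤ φ₀inv r' ^ (1 - θ) * φ₁inv r' ^ θ := by
    intro r r' hr hrr
    have h0 := orlicz_inv_mono hconv₀ hzero₀ hnonneg₀ hinv_nonneg₀ hright₀ hr hrr
    have h1 := orlicz_inv_mono hconv₁ hzero₁ hnonneg₁ hinv_nonneg₁ hright₁ hr hrr
    exact mul_le_mul (Real.rpow_le_rpow (hinv_nonneg₀ r hr) h0 (by linarith))
      (Real.rpow_le_rpow (hinv_nonneg₁ r hr) h1 hθ0.le)
      (Real.rpow_nonneg (hinv_nonneg₁ r hr) _)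
      (Real.rpow_nonneg (hinv_nonneg₀ r' (hr.trans hrr)) _)
  have hθmono : ∀ s s' : ℝ, 0 ≤ s → s ≤ s' → φθ s ≤ φθ s' := by
    intro s s' hs hss
    by_contra hcon
    push_neg at hcon
    have h1 := hrho_mono _ _ (hθnonneg s' (hs.trans hss)) hcon.le
    rw [hθright s hs, hθright s' (hs.trans hss)] at h1
    have h2 : s = s' := le_antisymm hss h1
    subst h2
    exact lt_irrefl _ hcon
  -- concavity of rho
  have hrho_concave : ∀ u v t : ℝ, 0 ≤ u → 0 ≤ v → 0 ≤ t → t ≤ 1 →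
      t * (φ₀inv u ^ (1 - θ) * φ₁inv u ^ θ) + (1 - t) * (φ₀inv v ^ (1 - θ) * φ₁inv v ^ θ)
        ≤ φ₀inv (t * u + (1 - t) * v) ^ (1 - θ) * φ₁inv (t * u + (1 - t) * v) ^ θ := by
    intro u v t hu hv ht0 ht1
    have hsplit : ∀ c A B : ℝ, 0 ≤ c → 0 ≤ A → 0 ≤ B →
        c * (A ^ (1 - θ) * B ^ θ) = (c * A) ^ (1 - θ) * (c * B) ^ θ := by
      intro c A B hc hA hB
      rw [Real.mul_rpow hc hA, Real.mul_rpow hc hB]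
      have : c ^ (1 - θ) * c ^ θ = c := by
        rw [← Real.rpow_add' hc (by norm_num : (1 - θ) + θ ≠ 0)]
        norm_num
      rw [show c ^ (1-θ) * A ^ (1-θ) * (c ^ θ * B ^ θ)
          = (c ^ (1-θ) * c ^ θ) * (A ^ (1-θ) * B ^ θ) from by ring, this]
    rw [hsplit t _ _ ht0 (hinv_nonneg₀ u hu) (hinv_nonneg₁ u hu),
        hsplit (1 - t) _ _ (by linarith) (hinv_nonneg₀ v hv) (hinv_nonneg₁ v hv)]
    have hga := geom_superadd (a0 := t * φ₀inv u) (a1 := t * φ₁inv u)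
      (b0 := (1 - t) * φ₀inv v) (b1 := (1 - t) * φ₁inv v) hθ0 hθ1
      (mul_nonneg ht0 (hinv_nonneg₀ u hu))
      (mul_nonneg ht0 (hinv_nonneg₁ u hu))
      (mul_nonneg (by linarith) (hinv_nonneg₀ v hv))
      (mul_nonneg (by linarith) (hinv_nonneg₁ v hv))
    refine hga.trans ?_
    have hc0 := orlicz_inv_concave hconv₀ hzero₀ hnonneg₀ hinv_nonneg₀ hleft₀ hright₀ hu hv ht0 ht1
    have hc1 := orlicz_inv_concave hconv₁ hzero₁ hnonneg₁ hinv_nonneg₁ hleft₁ hright₁ hu hv ht0 ht1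
    have hn0 : 0 ≤ t * φ₀inv u + (1 - t) * φ₀inv v :=
      add_nonneg (mul_nonneg ht0 (hinv_nonneg₀ u hu)) (mul_nonneg (by linarith) (hinv_nonneg₀ v hv))
    have hn1 : 0 ≤ t * φ₁inv u + (1 - t) * φ₁inv v :=
      add_nonneg (mul_nonneg ht0 (hinv_nonneg₁ u hu)) (mul_nonneg (by linarith) (hinv_nonneg₁ v hv))
    exact mul_le_mul (Real.rpow_le_rpow hn0 hc0 (by linarith))
      (Real.rpow_le_rpow hn1 hc1 hθ0.le)
      (Real.rpow_nonneg hn1 _)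
      (Real.rpow_nonneg (hinv_nonneg₀ _ (by nlinarith)) _)
  -- quasi-convexity (actual convexity) of φθ on two points
  have hφθconvex2 : ∀ a b t : ℝ, 0 ≤ a → 0 ≤ b → 0 ≤ t → t ≤ 1 →
      φθ (t * a + (1 - t) * b) ≤ t * φθ a + (1 - t) * φθ b := by
    intro a b t ha hb ht0 ht1
    have hea : a = φ₀inv (φθ a) ^ (1 - θ) * φ₁inv (φθ a) ^ θ := (hθright a ha).symm
    have heb : b = φ₀inv (φθ b) ^ (1 - θ) * φ₁inv (φθ b) ^ θ := (hθright b hb).symm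
    have h1 : t * a + (1 - t) * b
        ≤ φ₀inv (t * φθ a + (1 - t) * φθ b) ^ (1 - θ) * φ₁inv (t * φθ a + (1 - t) * φθ b) ^ θ := by
      nth_rewrite 1 [hea, heb]
      exact hrho_concave _ _ t (hθnonneg a ha) (hθnonneg b hb) ht0 ht1
    have h2 : φθ (t * a + (1 - t) * b) ≤ φθ (φ₀inv (t * φθ a + (1 - t) * φθ b) ^ (1 - θ)
        * φ₁inv (t * φθ a + (1 - t) * φθ b) ^ θ) :=
      hθmono _ _ (by nlinarith) h1
    rwa [hθleft _ (by nlinarith [hθnonneg a ha, hθnonneg b hb])] at h2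
  -- doubling
  have hrho_double : ∀ r : ℝ, 0 ≤ r →
      2 * (φ₀inv r ^ (1 - θ) * φ₁inv r ^ θ) ≤ φ₀inv (M * r) ^ (1 - θ) * φ₁inv (M * r) ^ θ := by
    intro r hr
    have h0 : 2 * φ₀inv r ≤ φ₀inv (M * r) := by
      refine (orlicz_inv_double hconv₀ hzero₀ hnonneg₀ hinv_nonneg₀ hleft₀ hright₀ hM₀ hΔ₀ hr).trans ?_
      exact orlicz_inv_mono hconv₀ hzero₀ hnonneg₀ hinv_nonneg₀ hright₀
        (by positivity) (mul_le_mul_of_nonneg_right (le_max_left _ _) hr)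
    have h1 : 2 * φ₁inv r ≤ φ₁inv (M * r) := by
      refine (orlicz_inv_double hconv₁ hzero₁ hnonneg₁ hinv_nonneg₁ hleft₁ hright₁ hM₁ hΔ₁ hr).trans ?_
      exact orlicz_inv_mono hconv₁ hzero₁ hnonneg₁ hinv_nonneg₁ hright₁
        (by positivity) (mul_le_mul_of_nonneg_right (le_max_right _ _) hr)
    have e1 : 2 * (φ₀inv r ^ (1 - θ) * φ₁inv r ^ θ)
        = (2 * φ₀inv r) ^ (1 - θ) * (2 * φ₁inv r) ^ θ := by
      rw [Real.mul_rpow (by norm_num) (hinv_nonneg₀ r hr),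
        Real.mul_rpow (by norm_num) (hinv_nonneg₁ r hr)]
      have h2 : (2:ℝ) ^ (1 - θ) * (2:ℝ) ^ θ = 2 := by
        rw [← Real.rpow_add (by norm_num : (0:ℝ) < 2)]
        norm_num
      rw [show (2:ℝ) ^ (1-θ) * φ₀inv r ^ (1-θ) * ((2:ℝ) ^ θ * φ₁inv r ^ θ)
          = ((2:ℝ) ^ (1-θ) * (2:ℝ) ^ θ) * (φ₀inv r ^ (1-θ) * φ₁inv r ^ θ) from by ring, h2]
    rw [e1]
    have hi0 : 0 ≤ φ₀inv r := hinv_nonneg₀ r hr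
    have hi1 : 0 ≤ φ₁inv r := hinv_nonneg₁ r hr
    exact mul_le_mul (Real.rpow_le_rpow (by linarith) h0 (by linarith))
      (Real.rpow_le_rpow (by linarith) h1 hθ0.le)
      (Real.rpow_nonneg (by linarith) _)
      (Real.rpow_nonneg (hinv_nonneg₀ _ (mul_nonneg hM.le hr)) _)
  have hφθΔ : ∀ s : ℝ, 0 ≤ s → φθ (2 * s) ≤ M * φθ s := by
    intro s hs
    have h1 : 2 * s = 2 * (φ₀inv (φθ s) ^ (1 - θ) * φ₁inv (φθ s) ^ θ) := by
      rw [hθright s hs]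
    have hrn : 0 ≤ φ₀inv (φθ s) ^ (1 - θ) * φ₁inv (φθ s) ^ θ := by
      rw [hθright s hs]; exact hs
    have h2 : φθ (2 * s) ≤ φθ (φ₀inv (M * φθ s) ^ (1 - θ) * φ₁inv (M * φθ s) ^ θ) := by
      rw [h1]
      exact hθmono _ _ (by linarith) (hrho_double _ (hθnonneg s hs))
    rwa [hθleft _ (mul_nonneg hM.le (hθnonneg s hs))] at h2
  have hφθpow : ∀ (k : ℕ) (r : ℝ), 0 ≤ r →
      φθ ((2:ℝ) ^ k * (φ₀inv r ^ (1 - θ) * φ₁inv r ^ θ)) ≤ M ^ k * r := by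
    intro k
    induction k with
    | zero =>
      intro r hr
      simpa using le_of_eq (hθleft r hr)
    | succ k ih =>
      intro r hr
      have hrhon : 0 ≤ φ₀inv r ^ (1 - θ) * φ₁inv r ^ θ :=
        mul_nonneg (Real.rpow_nonneg (hinv_nonneg₀ r hr) _) (Real.rpow_nonneg (hinv_nonneg₁ r hr) _)
      have e1 : (2:ℝ) ^ (k + 1) * (φ₀inv r ^ (1 - θ) * φ₁inv r ^ θ)
          = (2:ℝ) ^ k * (2 * (φ₀inv r ^ (1 - θ) * φ₁inv r ^ θ)) := by ring
      calc φθ ((2:ℝ) ^ (k+1) * (φ₀inv r ^ (1 - θ) * φ₁inv r ^ θ))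
          = φθ ((2:ℝ) ^ k * (2 * (φ₀inv r ^ (1 - θ) * φ₁inv r ^ θ))) := by rw [e1]
        _ ≤ φθ ((2:ℝ) ^ k * (φ₀inv (M * r) ^ (1 - θ) * φ₁inv (M * r) ^ θ)) := by
            apply hθmono _ _ (by positivity)
            exact mul_le_mul_of_nonneg_left (hrho_double r hr) (by positivity)
        _ ≤ M ^ k * (M * r) := ih (M * r) (by positivity)
        _ = M ^ (k + 1) * r := by ring
  -- the derivation formula
  set lam : ℝ → ℝ := fun r => Real.log (φ₁inv (φθ r)) - Real.log (φ₀inv (φθ r)) with hlam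
  have hΩeq : ∀ x : ℂ, Ω x = x * ((lam (‖x‖) : ℝ) : ℂ) := by
    intro x
    rcases eq_or_ne x 0 with rfl | hx
    · have hg0 : g 0 = fun _ : ℂ => (0:ℂ) := by
        funext w
        show _ * csgn 0 = (0:ℂ)
        rw [csgn, if_pos rfl, mul_zero]
      rw [hΩdef 0, hg0]
      simp
    · have hxabs : 0 < ‖x‖ := norm_pos_iff.mpr hx
      set a := φ₀inv (φθ (‖x‖)) with hadef
      set b := φ₁inv (φθ (‖x‖)) with hbdef
      have hap : 0 < a := hapos _ hxabs
      have hbp : 0 < b := hbpos _ hxabs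
      have hane : (a:ℂ) ≠ 0 := by exact_mod_cast hap.ne'
      have hbne : (b:ℂ) ≠ 0 := by exact_mod_cast hbp.ne'
      have h1 : HasDerivAt (fun z : ℂ => (a:ℂ) ^ ((1:ℂ) - z))
          ((a:ℂ) ^ ((1:ℂ) - (θ:ℂ)) * Complex.log (a:ℂ) * (-1)) (θ:ℂ) := by
        have hid : HasDerivAt (fun z : ℂ => (1:ℂ) - z) (-1 : ℂ) (θ:ℂ) := by
          simpa using (hasDerivAt_id (θ:ℂ)).const_sub (1:ℂ)
        exact hid.const_cpow (Or.inl hane)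
      have h2 : HasDerivAt (fun z : ℂ => (b:ℂ) ^ z)
          ((b:ℂ) ^ (θ:ℂ) * Complex.log (b:ℂ) * 1) (θ:ℂ) := by
        simpa using (hasDerivAt_id (θ:ℂ)).const_cpow (c := (b:ℂ)) (Or.inl hbne)
      have h3 := (h1.mul h2).mul_const (csgn x)
      have h4 : Ω x = ((a:ℂ) ^ ((1:ℂ) - (θ:ℂ)) * Complex.log (a:ℂ) * (-1) * (b:ℂ) ^ (θ:ℂ)
          + (a:ℂ) ^ ((1:ℂ) - (θ:ℂ)) * ((b:ℂ) ^ (θ:ℂ) * Complex.log (b:ℂ) * 1)) * csgn x :=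
        h3.deriv
      have hab : (a:ℂ) ^ ((1:ℂ) - (θ:ℂ)) * (b:ℂ) ^ (θ:ℂ) = ((‖x‖ : ℝ) : ℂ) := by
        have e1 : ((1:ℂ) - (θ:ℂ)) = ((1 - θ : ℝ) : ℂ) := by push_cast; ring
        rw [e1, ← Complex.ofReal_cpow hap.le, ← Complex.ofReal_cpow hbp.le, ← Complex.ofReal_mul]
        exact_mod_cast hθright _ (norm_nonneg x)
      have hsgn : ((‖x‖ : ℝ) : ℂ) * csgn x = x := by
        rw [csgn, if_neg hx]
        have hne : ((‖x‖ : ℝ) : ℂ) ≠ 0 := by exact_mod_cast hxabs.ne'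
        field_simp
      have hla : Complex.log (a:ℂ) = ((Real.log a : ℝ) : ℂ) := (Complex.ofReal_log hap.le).symm
      have hlb : Complex.log (b:ℂ) = ((Real.log b : ℝ) : ℂ) := (Complex.ofReal_log hbp.le).symm
      calc Ω x = ((a:ℂ) ^ ((1:ℂ) - (θ:ℂ)) * Complex.log (a:ℂ) * (-1) * (b:ℂ) ^ (θ:ℂ)
          + (a:ℂ) ^ ((1:ℂ) - (θ:ℂ)) * ((b:ℂ) ^ (θ:ℂ) * Complex.log (b:ℂ) * 1)) * csgn x := h4
        _ = ((a:ℂ) ^ ((1:ℂ) - (θ:ℂ)) * (b:ℂ) ^ (θ:ℂ)) * csgn x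
            * (Complex.log (b:ℂ) - Complex.log (a:ℂ)) := by ring
        _ = ((‖x‖ : ℝ) : ℂ) * csgn x
            * (((Real.log b : ℝ) : ℂ) - ((Real.log a : ℝ) : ℂ)) := by rw [hab, hla, hlb]
        _ = x * ((lam (‖x‖) : ℝ) : ℂ) := by
            rw [hsgn, hlam]
            push_cast
            ring
  -- boundary identities
  have hbd0 : ∀ x : ℂ, ‖x‖ * Real.exp (-θ * lam (‖x‖))
      = φ₀inv (φθ (‖x‖)) := by
    intro x
    rcases eq_or_ne x 0 with rfl | hx
    · simp [hφθ0, hinv₀0]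
    · have hxabs : 0 < ‖x‖ := norm_pos_iff.mpr hx
      set a := φ₀inv (φθ (‖x‖)) with hadef
      set b := φ₁inv (φθ (‖x‖)) with hbdef
      have hap : 0 < a := hapos _ hxabs
      have hbp : 0 < b := hbpos _ hxabs
      have habs : ‖x‖ = a ^ (1 - θ) * b ^ θ := (hθright _ (norm_nonneg x)).symm
      have hlamx : lam (‖x‖) = Real.log b - Real.log a := by rw [hlam]
      rw [hlamx, habs]
      rw [show -θ * (Real.log b - Real.log a) = Real.log a * θ + -(Real.log b * θ) by ring,
        Real.exp_add, Real.exp_neg, ← Real.rpow_def_of_pos hap, ← Real.rpow_def_of_pos hbp]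
      have hbθ : (0:ℝ) < b ^ θ := Real.rpow_pos_of_pos hbp θ
      calc a ^ (1-θ) * b ^ θ * (a ^ θ * (b ^ θ)⁻¹)
          = (a ^ (1-θ) * a ^ θ) * (b ^ θ * (b ^ θ)⁻¹) := by ring
        _ = a := by
            rw [← Real.rpow_add hap, mul_inv_cancel₀ hbθ.ne']
            norm_num
  have hbd1 : ∀ x : ℂ, ‖x‖ * Real.exp ((1 - θ) * lam (‖x‖))
      = φ₁inv (φθ (‖x‖)) := by
    intro x
    rcases eq_or_ne x 0 with rfl | hx
    · simp [hφθ0, hinv₁0]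
    · have hxabs : 0 < ‖x‖ := norm_pos_iff.mpr hx
      set a := φ₀inv (φθ (‖x‖)) with hadef
      set b := φ₁inv (φθ (‖x‖)) with hbdef
      have hap : 0 < a := hapos _ hxabs
      have hbp : 0 < b := hbpos _ hxabs
      have habs : ‖x‖ = a ^ (1 - θ) * b ^ θ := (hθright _ (norm_nonneg x)).symm
      have hlamx : lam (‖x‖) = Real.log b - Real.log a := by rw [hlam]
      rw [hlamx, habs]
      rw [show (1 - θ) * (Real.log b - Real.log a)
          = Real.log b * (1 - θ) + -(Real.log a * (1 - θ)) by ring,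
        Real.exp_add, Real.exp_neg, ← Real.rpow_def_of_pos hap, ← Real.rpow_def_of_pos hbp]
      have haθ : (0:ℝ) < a ^ (1 - θ) := Real.rpow_pos_of_pos hap _
      calc a ^ (1-θ) * b ^ θ * (b ^ (1-θ) * (a ^ (1-θ))⁻¹)
          = (b ^ θ * b ^ (1-θ)) * (a ^ (1-θ) * (a ^ (1-θ))⁻¹) := by ring
        _ = b := by
            rw [← Real.rpow_add hbp, mul_inv_cancel₀ haθ.ne']
            norm_num
  -- part 1
  obtain ⟨m, hm⟩ := pow_unbounded_of_one_lt (2 / min θ (1 - θ)) (by norm_num : (1:ℝ) < 2)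
  set β : ℝ := M ^ m with hβdef
  have hβpos : 0 < β := pow_pos hM m
  have hpart1 : ∀ x y : ℂ, ∀ t ∈ Set.Icc (0:ℝ) 1,
      φθ (‖t • Ω x + (1 - t) • Ω y - Ω (t • x + (1 - t) • y)‖) ≤
        β * (t * φθ (‖x‖) + (1 - t) * φθ (‖y‖)) := by
    intro x y t ht
    obtain ⟨ht0, ht1⟩ := ht
    set z : ℂ := t • x + (1 - t) • y with hzdef
    set u := φθ (‖x‖) with hu
    set v := φθ (‖y‖) with hv
    have hun : 0 ≤ u := hθnonneg _ (norm_nonneg x)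
    have hvn : 0 ≤ v := hθnonneg _ (norm_nonneg y)
    set s := t * u + (1 - t) * v with hs
    have hsn : 0 ≤ s := by nlinarith
    have htl := threelines_core hθ0 hθ1 ht0 ht1 x y (lam (‖x‖)) (lam (‖y‖))
      (lam (‖z‖)) _ _ _ _ _ _ (hbd0 x) (hbd1 x) (hbd0 y) (hbd1 y) (hbd0 z) (hbd1 z)
    have hdefeq : t • Ω x + (1 - t) • Ω y - Ω z
        = t • (x * ((lam (‖x‖) : ℝ) : ℂ)) + (1 - t) • (y * ((lam (‖y‖) : ℝ) : ℂ))
          - z * ((lam (‖z‖) : ℝ) : ℂ) := by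
      rw [hΩeq x, hΩeq y, hΩeq z]
    rw [hdefeq]
    -- abbreviations
    have hzabs : ‖z‖ ≤ t * ‖x‖ + (1 - t) * ‖y‖ := by
      rw [hzdef]
      refine (norm_add_le _ _).trans (le_of_eq ?_)
      rw [Complex.real_smul, Complex.real_smul, norm_mul, norm_mul, Complex.norm_real,
        Complex.norm_real, Real.norm_eq_abs, Real.norm_eq_abs, _root_.abs_of_nonneg ht0, _root_.abs_of_nonneg (by linarith : (0:ℝ) ≤ 1 - t)]
    have hφθz : φθ (‖z‖) ≤ s := by
      have h1 : φθ (‖z‖) ≤ φθ (t * ‖x‖ + (1 - t) * ‖y‖) :=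
        hθmono _ _ (norm_nonneg z) hzabs
      have h2 := hφθconvex2 (‖x‖) (‖y‖) t (norm_nonneg x)
        (norm_nonneg y) ht0 ht1
      rw [hs, hu, hv]
      linarith
    have hzn : 0 ≤ φθ (‖z‖) := hθnonneg _ (norm_nonneg z)
    have hC0le : φ₀inv (φθ (‖z‖)) ≤ φ₀inv s :=
      orlicz_inv_mono hconv₀ hzero₀ hnonneg₀ hinv_nonneg₀ hright₀ hzn hφθz
    have hC1le : φ₁inv (φθ (‖z‖)) ≤ φ₁inv s :=
      orlicz_inv_mono hconv₁ hzero₁ hnonneg₁ hinv_nonneg₁ hright₁ hzn hφθz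
    have hAB0 : t * φ₀inv u + (1 - t) * φ₀inv v ≤ φ₀inv s :=
      orlicz_inv_concave hconv₀ hzero₀ hnonneg₀ hinv_nonneg₀ hleft₀ hright₀ hun hvn ht0 ht1
    have hAB1 : t * φ₁inv u + (1 - t) * φ₁inv v ≤ φ₁inv s :=
      orlicz_inv_concave hconv₁ hzero₁ hnonneg₁ hinv_nonneg₁ hleft₁ hright₁ hun hvn ht0 ht1
    have hS0 : t * φ₀inv u + (1 - t) * φ₀inv v + φ₀inv (φθ (‖z‖)) ≤ 2 * φ₀inv s := by
      linarith
    have hS1 : t * φ₁inv u + (1 - t) * φ₁inv v + φ₁inv (φθ (‖z‖)) ≤ 2 * φ₁inv s := by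
      linarith
    set δ := min θ (1 - θ) with hδdef
    have hδpos : 0 < δ := lt_min hθ0 hθ1'
    have hnum0 : 0 ≤ (t * φ₀inv u + (1 - t) * φ₀inv v + φ₀inv (φθ (‖z‖))) / θ := by
      have i1 : 0 ≤ t * φ₀inv u := mul_nonneg ht0 (hinv_nonneg₀ u hun)
      have i2 : 0 ≤ (1 - t) * φ₀inv v := mul_nonneg (by linarith) (hinv_nonneg₀ v hvn)
      have i3 : 0 ≤ φ₀inv (φθ (‖z‖)) := hinv_nonneg₀ _ hzn
      positivity
    have hnum1 : 0 ≤ (t * φ₁inv u + (1 - t) * φ₁inv v + φ₁inv (φθ (‖z‖))) / (1 - θ) := by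
      have i1 : 0 ≤ t * φ₁inv u := mul_nonneg ht0 (hinv_nonneg₁ u hun)
      have i2 : 0 ≤ (1 - t) * φ₁inv v := mul_nonneg (by linarith) (hinv_nonneg₁ v hvn)
      have i3 : 0 ≤ φ₁inv (φθ (‖z‖)) := hinv_nonneg₁ _ hzn
      positivity
    have hφ0s : 0 ≤ φ₀inv s := hinv_nonneg₀ s hsn
    have hφ1s : 0 ≤ φ₁inv s := hinv_nonneg₁ s hsn
    have hP0 : (t * φ₀inv u + (1 - t) * φ₀inv v + φ₀inv (φθ (‖z‖))) / θ
        ≤ 2 * φ₀inv s / δ :=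
      div_le_div₀ (by linarith) hS0 hδpos (min_le_left _ _)
    have hP1 : (t * φ₁inv u + (1 - t) * φ₁inv v + φ₁inv (φθ (‖z‖))) / (1 - θ)
        ≤ 2 * φ₁inv s / δ :=
      div_le_div₀ (by linarith) hS1 hδpos (min_le_right _ _)
    have hstep : ((t * φ₀inv u + (1 - t) * φ₀inv v + φ₀inv (φθ (‖z‖))) / θ) ^ (1 - θ)
          * ((t * φ₁inv u + (1 - t) * φ₁inv v + φ₁inv (φθ (‖z‖))) / (1 - θ)) ^ θ
        ≤ (2 * φ₀inv s / δ) ^ (1 - θ) * (2 * φ₁inv s / δ) ^ θ :=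
      mul_le_mul (Real.rpow_le_rpow hnum0 hP0 (by linarith))
        (Real.rpow_le_rpow hnum1 hP1 hθ0.le)
        (Real.rpow_nonneg hnum1 _)
        (Real.rpow_nonneg (div_nonneg (by linarith) hδpos.le) _)
    have hcollect : (2 * φ₀inv s / δ) ^ (1 - θ) * (2 * φ₁inv s / δ) ^ θ
        = (2 / δ) * (φ₀inv s ^ (1 - θ) * φ₁inv s ^ θ) := by
      rw [show 2 * φ₀inv s / δ = (2 / δ) * φ₀inv s by ring,
        show 2 * φ₁inv s / δ = (2 / δ) * φ₁inv s by ring,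
        Real.mul_rpow (by positivity) (hinv_nonneg₀ s hsn),
        Real.mul_rpow (by positivity) (hinv_nonneg₁ s hsn)]
      have h2δ : (2 / δ) ^ (1 - θ) * (2 / δ) ^ θ = 2 / δ := by
        rw [← Real.rpow_add (by positivity)]
        norm_num
      calc (2/δ) ^ (1-θ) * φ₀inv s ^ (1-θ) * ((2/δ) ^ θ * φ₁inv s ^ θ)
          = ((2/δ) ^ (1-θ) * (2/δ) ^ θ) * (φ₀inv s ^ (1-θ) * φ₁inv s ^ θ) := by ring
        _ = (2/δ) * (φ₀inv s ^ (1-θ) * φ₁inv s ^ θ) := by rw [h2δ]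
    have hrhosn : 0 ≤ φ₀inv s ^ (1 - θ) * φ₁inv s ^ θ :=
      mul_nonneg (Real.rpow_nonneg (hinv_nonneg₀ s hsn) _) (Real.rpow_nonneg (hinv_nonneg₁ s hsn) _)
    have hfin1 : (2 / δ) * (φ₀inv s ^ (1 - θ) * φ₁inv s ^ θ)
        ≤ (2:ℝ) ^ m * (φ₀inv s ^ (1 - θ) * φ₁inv s ^ θ) :=
      mul_le_mul_of_nonneg_right hm.le hrhosn
    have habsle : ‖t • (x * ((lam (‖x‖) : ℝ) : ℂ))
          + (1 - t) • (y * ((lam (‖y‖) : ℝ) : ℂ)) - z * ((lam (‖z‖) : ℝ) : ℂ)‖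
        ≤ (2:ℝ) ^ m * (φ₀inv s ^ (1 - θ) * φ₁inv s ^ θ) := by
      refine htl.trans ?_
      rw [← hcollect] at hfin1
      exact hstep.trans hfin1
    calc φθ (‖t • (x * ((lam (‖x‖) : ℝ) : ℂ))
          + (1 - t) • (y * ((lam (‖y‖) : ℝ) : ℂ)) - z * ((lam (‖z‖) : ℝ) : ℂ)‖)
        ≤ φθ ((2:ℝ) ^ m * (φ₀inv s ^ (1 - θ) * φ₁inv s ^ θ)) :=
          hθmono _ _ (norm_nonneg _) habsle
      _ ≤ M ^ m * s := hφθpow m s hsn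
      _ = β * (t * u + (1 - t) * v) := by rw [hβdef, hs]
  refine ⟨⟨1, β, one_pos, hβpos, hpart1⟩, ⟨1 + M * β + M, by positivity, ?_⟩⟩
  -- part 2
  intro p q t ht
  obtain ⟨ht0, ht1⟩ := ht
  have hsnd : (t • p + (1 - t) • q).2 = t • p.2 + (1 - t) • q.2 := rfl
  have hfst : (t • p + (1 - t) • q).1 = t • p.1 + (1 - t) • q.1 := rfl
  rw [hΨdef, hΨdef p, hΨdef q, hsnd, hfst]
  set E : ℂ := t • (p.1 - Ω p.2) + (1 - t) • (q.1 - Ω q.2) with hE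
  set F : ℂ := t • Ω p.2 + (1 - t) • Ω q.2 - Ω (t • p.2 + (1 - t) • q.2) with hF
  have hEF : t • p.1 + (1 - t) • q.1 - Ω (t • p.2 + (1 - t) • q.2) = E + F := by
    rw [hE, hF]
    simp only [smul_sub]
    abel
  have habs2 : ∀ w w' : ℂ, ‖t • w + (1 - t) • w'‖
      ≤ t * ‖w‖ + (1 - t) * ‖w'‖ := by
    intro w w'
    refine (norm_add_le _ _).trans (le_of_eq ?_)
    rw [Complex.real_smul, Complex.real_smul, norm_mul, norm_mul, Complex.norm_real,
      Complex.norm_real, Real.norm_eq_abs, Real.norm_eq_abs, _root_.abs_of_nonneg ht0, _root_.abs_of_nonneg (by linarith : (0:ℝ) ≤ 1 - t)]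
  have hT1 : φθ (‖t • p.2 + (1 - t) • q.2‖)
      ≤ t * φθ (‖p.2‖) + (1 - t) * φθ (‖q.2‖) :=
    (hθmono _ _ (norm_nonneg _) (habs2 p.2 q.2)).trans
      (hφθconvex2 _ _ t (norm_nonneg _) (norm_nonneg _) ht0 ht1)
  have hE1 : φθ (‖E‖)
      ≤ t * φθ (‖p.1 - Ω p.2‖) + (1 - t) * φθ (‖q.1 - Ω q.2‖) := by
    rw [hE]
    exact (hθmono _ _ (norm_nonneg _) (habs2 _ _)).trans
      (hφθconvex2 _ _ t (norm_nonneg _) (norm_nonneg _) ht0 ht1)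
  have hF1 : φθ (‖F‖)
      ≤ β * (t * φθ (‖p.2‖) + (1 - t) * φθ (‖q.2‖)) := by
    rw [hF]
    exact hpart1 p.2 q.2 t ⟨ht0, ht1⟩
  have hEFb : φθ (‖E + F‖) ≤ M * (φθ (‖E‖) + φθ (‖F‖)) := by
    have h1 : ‖E + F‖ ≤ 2 * max (‖E‖) (‖F‖) := by
      have h2 := norm_add_le E F
      have h3 : ‖E‖ ≤ max (‖E‖) (‖F‖) := le_max_left _ _
      have h4 : ‖F‖ ≤ max (‖E‖) (‖F‖) := le_max_right _ _
      linarith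
    have h5 : φθ (‖E + F‖) ≤ φθ (2 * max (‖E‖) (‖F‖)) :=
      hθmono _ _ (norm_nonneg _) h1
    have h6 : φθ (2 * max (‖E‖) (‖F‖))
        ≤ M * φθ (max (‖E‖) (‖F‖)) :=
      hφθΔ _ ((norm_nonneg E).trans (le_max_left _ _))
    have h7 : φθ (max (‖E‖) (‖F‖)) ≤ φθ (‖E‖) + φθ (‖F‖) := by
      rcases max_cases (‖E‖) (‖F‖) with ⟨heq, _⟩ | ⟨heq, _⟩ <;> rw [heq]
      · linarith [hθnonneg _ (norm_nonneg F)]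
      · linarith [hθnonneg _ (norm_nonneg E)]
    calc φθ (‖E + F‖) ≤ φθ (2 * max (‖E‖) (‖F‖)) := h5
      _ ≤ M * φθ (max (‖E‖) (‖F‖)) := h6
      _ ≤ M * (φθ (‖E‖) + φθ (‖F‖)) :=
          mul_le_mul_of_nonneg_left h7 hM.le
  rw [hEF]
  have hp2n : 0 ≤ φθ (‖p.2‖) := hθnonneg _ (norm_nonneg _)
  have hq2n : 0 ≤ φθ (‖q.2‖) := hθnonneg _ (norm_nonneg _)
  have hp1n : 0 ≤ φθ (‖p.1 - Ω p.2‖) := hθnonneg _ (norm_nonneg _)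
  have hq1n : 0 ≤ φθ (‖q.1 - Ω q.2‖) := hθnonneg _ (norm_nonneg _)
  have hEn : 0 ≤ φθ (‖E‖) := hθnonneg _ (norm_nonneg _)
  have hFn : 0 ≤ φθ (‖F‖) := hθnonneg _ (norm_nonneg _)
  nlinarith [mul_le_mul_of_nonneg_left hE1 hM.le, mul_le_mul_of_nonneg_left hF1 hM.le,
    mul_nonneg ht0 hp2n, mul_nonneg (by linarith : (0:ℝ) ≤ 1 - t) hq2n,
    mul_nonneg ht0 hp1n, mul_nonneg (by linarith : (0:ℝ) ≤ 1 - t) hq1n,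
    mul_nonneg hM.le hβpos.le]
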